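/- Over a field F of characteristic 0, the Weyr structure of the n-th Sierpinski matrix B_n at its eigenvalue 1 is the multiset of binomial coefficients C(n, k), k = 0, ..., n, arranged in non-increasing order; equivalently, the multiset {rank((B_n - I)^(i-1)) - rank((B_n - I)^i) : 1 ≤ i ≤ n+1} equals the multiset {C(n,k) : 0 ≤ k ≤ n}. -/

import Mathlib

set_option linter.unusedSectionVars false
set_option maxHeartbeats 1000000

/-- partial sums of binomial coefficients with floored index -/
def sierS (n t : ℕ) : ℕ := ∑ m ∈ Finset.range t, n.choose (m / 2)

lemma sierS_succ (n t : ℕ) : sierS n (t + 1) = sierS n t + n.choose (t / 2) :=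
  Finset.sum_range_succ _ _

lemma sierS_rec (n : ℕ) : ∀ t, sierS (n + 1) t = sierS n t + sierS n (t - 2) := by
  intro t
  induction t with
  | zero => simp [sierS]
  | succ t ih =>
    rw [sierS_succ, ih]
    rcases t with _ | _ | t
    · simp [sierS_succ, sierS]
    · simp [sierS, Finset.sum_range_succ]
    · have e2 : t + 1 + 1 - 2 = t := by omega
      have e3 : t + 1 + 1 + 1 - 2 = t + 1 := by omega
      have e4 : (t + 1 + 1) / 2 = t / 2 + 1 := by omega
      rw [e2, e3, e4]
      have e1 : sierS n (t + 1 + 1 + 1) = sierS n (t + 1 + 1) + n.choose (t / 2 + 1) := by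
        rw [sierS_succ, e4]
      have e5 : sierS n (t + 1) = sierS n t + n.choose (t / 2) := sierS_succ _ _
      have e6 : (n + 1).choose (t / 2 + 1) = n.choose (t / 2) + n.choose (t / 2 + 1) :=
        Nat.choose_succ_succ _ _
      omega

lemma choose_half_succ (n : ℕ) : n.choose ((n + 1) / 2) = n.choose (n / 2) := by
  rcases Nat.even_or_odd n with h | h
  · obtain ⟨k, hk⟩ := h
    have : (n + 1) / 2 = n / 2 := by omega
    rw [this]
  · obtain ⟨k, hk⟩ := h
    have h1 : (n + 1) / 2 = k + 1 := by omega
    have h2 : n / 2 = k := by omega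
    rw [h1, h2, ← Nat.choose_symm (show k + 1 ≤ n by omega)]
    congr 1
    omega

lemma sierS_self (n : ℕ) : sierS n (n + 1) = 2 ^ n := by
  induction n with
  | zero => simp [sierS]
  | succ n ih =>
    show sierS (n + 1) (n + 2) = 2 ^ (n + 1)
    have h1 := sierS_rec n (n + 2)
    have h2 : sierS n (n + 2) = sierS n (n + 1) + n.choose ((n + 1) / 2) := sierS_succ n (n + 1)
    have h3 : sierS n (n + 1) = sierS n n + n.choose (n / 2) := sierS_succ n n
    have h4 := choose_half_succ n
    have h5 : 2 ^ (n + 1) = 2 ^ n + 2 ^ n := by rw [pow_succ]; omega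
    have h6 : (n + 2) - 2 = n := by omega
    rw [h6] at h1
    omega

/-- the permutation step -/
lemma multiset_binom (n : ℕ) :
    (Multiset.range (n + 1)).map (fun i => n.choose ((n - i) / 2)) =
      (Multiset.range (n + 1)).map (fun k => n.choose k) := by
  set σ : ℕ → ℕ := fun i => if (n - i) % 2 = 0 then (n - i) / 2 else n - (n - i) / 2 with hσ
  have hinj : ∀ x ∈ Multiset.range (n + 1), ∀ y ∈ Multiset.range (n + 1), σ x = σ y → x = y := by
    intro x hx y hy h
    rw [Multiset.mem_range] at hx hy
    simp only [hσ] at h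
    split_ifs at h <;> omega
  have hmem : ∀ x ∈ Multiset.range (n + 1), σ x ∈ Multiset.range (n + 1) := by
    intro x hx
    rw [Multiset.mem_range] at hx ⊢
    simp only [hσ]
    split_ifs <;> omega
  have hperm : (Multiset.range (n + 1)).map σ = Multiset.range (n + 1) := by
    apply Multiset.eq_of_le_of_card_le
    · rw [Multiset.le_iff_subset ((Multiset.nodup_range _).map_on hinj)]
      intro a ha
      rw [Multiset.mem_map] at ha
      obtain ⟨x, hx, rfl⟩ := ha
      exact hmem x hx
    · simp
  have hcomp : ∀ i, n.choose (σ i) = n.choose ((n - i) / 2) := by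
    intro i
    simp only [hσ]
    split_ifs with h
    · rfl
    · rw [← Nat.choose_symm (show (n - i) / 2 ≤ n by omega)]
  calc (Multiset.range (n + 1)).map (fun i => n.choose ((n - i) / 2))
      = (Multiset.range (n + 1)).map (fun i => n.choose (σ i)) :=
        Multiset.map_congr rfl (fun x _ => (hcomp x).symm)
    _ = ((Multiset.range (n + 1)).map σ).map (fun k => n.choose k) := by
        rw [Multiset.map_map]; rfl
    _ = (Multiset.range (n + 1)).map (fun k => n.choose k) := by rw [hperm]




open Matrix Module LinearMap

section BlockRank

variable {F : Type*} [Field F] {m n m' n' : Type*}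
  [Fintype m] [Fintype n] [Fintype m'] [Fintype n']

lemma rank_fromBlocks_diag (A : Matrix m m' F) (D : Matrix n n' F) :
    (fromBlocks A 0 0 D).rank = A.rank + D.rank := by
  classical
  set e₁ := LinearEquiv.sumArrowLequivProdArrow m' n' F F with he₁
  set e₂ := LinearEquiv.sumArrowLequivProdArrow m n F F with he₂
  have hmv : ∀ v : m' ⊕ n' → F,
      (fromBlocks A 0 0 D) *ᵥ v = Sum.elim (A *ᵥ (v ∘ Sum.inl)) (D *ᵥ (v ∘ Sum.inr)) := by
    intro v
    conv_lhs => rw [← Sum.elim_comp_inl_inr v]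
    rw [fromBlocks_mulVec]
    simp [Matrix.zero_mulVec]
  have key : (fromBlocks A 0 0 D).mulVecLin
      = e₂.symm.toLinearMap ∘ₗ (A.mulVecLin.prodMap D.mulVecLin) ∘ₗ e₁.toLinearMap := by
    apply LinearMap.ext
    intro v
    funext x
    cases x with
    | inl a =>
      simp [hmv, e₁, e₂, LinearEquiv.sumArrowLequivProdArrow, Equiv.sumArrowEquivProdArrow]
    | inr b =>
      simp [hmv, e₁, e₂, LinearEquiv.sumArrowLequivProdArrow, Equiv.sumArrowEquivProdArrow]
  rw [Matrix.rank, key]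
  rw [LinearMap.range_comp, LinearMap.range_comp_of_range_eq_top _ e₁.range]
  rw [LinearEquiv.finrank_map_eq]
  have hsplit : range (A.mulVecLin.prodMap D.mulVecLin)
      = Submodule.map (LinearMap.inl F (m → F) (n → F)) (range A.mulVecLin)
        ⊔ Submodule.map (LinearMap.inr F (m → F) (n → F)) (range D.mulVecLin) := by
    have hco : A.mulVecLin.prodMap D.mulVecLin
        = ((LinearMap.inl F (m → F) (n → F)).comp A.mulVecLin).coprod
            ((LinearMap.inr F (m → F) (n → F)).comp D.mulVecLin) := by
      apply LinearMap.ext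
      rintro ⟨x, y⟩
      simp [LinearMap.prodMap_apply, LinearMap.coprod_apply, Prod.ext_iff]
    rw [hco, LinearMap.range_coprod, LinearMap.range_comp, LinearMap.range_comp]
  rw [hsplit]
  have hdisj : Submodule.map (LinearMap.inl F (m → F) (n → F)) (range A.mulVecLin)
      ⊓ Submodule.map (LinearMap.inr F (m → F) (n → F)) (range D.mulVecLin) = ⊥ := by
    rw [Submodule.eq_bot_iff]
    intro x hx
    rw [Submodule.mem_inf] at hx
    obtain ⟨h1, h2⟩ := hx
    rw [Submodule.mem_map] at h1 h2
    obtain ⟨u, -, hu⟩ := h1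
    obtain ⟨v, -, hv⟩ := h2
    rw [LinearMap.inl_apply] at hu
    rw [LinearMap.inr_apply] at hv
    subst hu
    obtain ⟨h01, h02⟩ := Prod.mk.injEq _ _ _ _ |>.mp hv
    rw [← h01]
    rfl
  have hfin := Submodule.finrank_sup_add_finrank_inf_eq
    (Submodule.map (LinearMap.inl F (m → F) (n → F)) (range A.mulVecLin))
    (Submodule.map (LinearMap.inr F (m → F) (n → F)) (range D.mulVecLin))
  rw [hdisj, finrank_bot, add_zero] at hfin
  rw [hfin]
  congr 1
  · exact (LinearEquiv.finrank_eq
      ((range A.mulVecLin).equivMapOfInjective _ LinearMap.inl_injective)).symm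
  · exact (LinearEquiv.finrank_eq
      ((range D.mulVecLin).equivMapOfInjective _ LinearMap.inr_injective)).symm

variable [DecidableEq m]

lemma rank_fromBlocks_anti (X Y : Matrix m m F) :
    (fromBlocks 0 X Y 0).rank = X.rank + Y.rank := by
  have h : (fromBlocks (0 : Matrix m m F) X Y 0)
      = reindex (Equiv.refl _) (Equiv.sumComm m m) (fromBlocks X 0 0 Y) := by
    ext i j
    cases i <;> cases j <;> rfl
  rw [h, rank_reindex, rank_fromBlocks_diag]

lemma pow_fromBlocks (N B : Matrix m m F) (h : B * N = N * B) (i : ℕ) :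
    (fromBlocks N B 0 N) ^ (i + 1) =
      fromBlocks (N ^ (i + 1)) ((i + 1) • (N ^ i * B)) 0 (N ^ (i + 1)) := by
  induction i with
  | zero => simp
  | succ i ih =>
    rw [pow_succ, ih, fromBlocks_multiply]
    have hB : N ^ (i + 1) * B + ((i + 1) • (N ^ i * B)) * N
        = (i + 1 + 1) • (N ^ (i + 1) * B) := by
      rw [smul_mul_assoc, mul_assoc, h, ← mul_assoc, ← pow_succ,
        succ_nsmul (N ^ (i + 1) * B) (i + 1), add_comm]
    simp only [Matrix.mul_zero, Matrix.zero_mul, add_zero, zero_add, ← pow_succ, hB]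

lemma rank_aux (N C : Matrix m m F) (hC : IsUnit C.det) (h : Commute C N) (i : ℕ) :
    (fromBlocks (N ^ (i + 1)) (N ^ i * C) 0 (N ^ (i + 1))).rank
      = (N ^ i).rank + (N ^ (i + 2)).rank := by
  have hCu : IsUnit C := (Matrix.isUnit_iff_isUnit_det C).mpr hC
  obtain ⟨u, hu⟩ := hCu
  have hinv : (C⁻¹ : Matrix m m F) = ↑u⁻¹ := by rw [← hu, ← Matrix.coe_units_inv]
  have hcomm_inv : Commute (C⁻¹ : Matrix m m F) N := by
    rw [hinv]
    exact (hu ▸ h : Commute (↑u : Matrix m m F) N).units_inv_left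
  have hCinv : ∀ k : ℕ, C⁻¹ * N ^ k * C = N ^ k := by
    intro k
    rw [(hcomm_inv.pow_right k).eq, Matrix.mul_assoc, nonsing_inv_mul _ hC, Matrix.mul_one]
  set P : Matrix (m ⊕ m) (m ⊕ m) F := fromBlocks 1 0 (-(C⁻¹ * N)) 1 with hP
  have hPdet : IsUnit P.det := by
    rw [hP, det_fromBlocks_zero₁₂, det_one, one_mul]
    exact isUnit_one
  set M : Matrix (m ⊕ m) (m ⊕ m) F := fromBlocks (N ^ (i + 1)) (N ^ i * C) 0 (N ^ (i + 1))
    with hM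
  have h3 : C⁻¹ * N * N ^ (i + 1) = C⁻¹ * N ^ (i + 2) := by
    rw [Matrix.mul_assoc, ← pow_succ']
  have h4 : C⁻¹ * N * (N ^ i * C) = N ^ (i + 1) := by
    rw [← Matrix.mul_assoc, Matrix.mul_assoc C⁻¹ N (N ^ i), ← pow_succ', hCinv]
  have h5 : N ^ i * C * (C⁻¹ * N) = N ^ (i + 1) := by
    rw [← Matrix.mul_assoc, Matrix.mul_assoc (N ^ i) C C⁻¹, mul_nonsing_inv _ hC,
      Matrix.mul_one, ← pow_succ]
  have hPM : P * M = fromBlocks (N ^ (i + 1)) (N ^ i * C) (-(C⁻¹ * N ^ (i + 2))) 0 := by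
    rw [hP, hM, fromBlocks_multiply]
    simp only [Matrix.one_mul, Matrix.mul_one, Matrix.zero_mul, Matrix.mul_zero,
      add_zero, zero_add, Matrix.neg_mul, h3, h4, neg_add_cancel]
  have hPMP : P * M * P = fromBlocks 0 (N ^ i * C) (-(C⁻¹ * N ^ (i + 2))) 0 := by
    rw [hPM, hP, fromBlocks_multiply]
    simp only [Matrix.one_mul, Matrix.mul_one, Matrix.zero_mul, Matrix.mul_zero,
      add_zero, zero_add, Matrix.mul_neg, Matrix.neg_mul, h5, add_neg_cancel, neg_zero]
  have hr : (P * M * P).rank = M.rank := by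
    rw [rank_mul_eq_left_of_isUnit_det P (P * M) hPdet,
      rank_mul_eq_right_of_isUnit_det P M hPdet]
  rw [← hr, hPMP, rank_fromBlocks_anti, rank_mul_eq_left_of_isUnit_det C (N ^ i) hC]
  congr 1
  have hneg : -(C⁻¹ * N ^ (i + 2)) = (-C⁻¹) * N ^ (i + 2) := (Matrix.neg_mul _ _).symm
  have hdet : IsUnit (-C⁻¹ : Matrix m m F).det := by
    rw [Matrix.det_neg]
    exact ((isUnit_one.neg).pow _).mul
      (IsUnit.of_mul_eq_one _ (Matrix.det_nonsing_inv_mul_det C hC))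
  rw [hneg, rank_mul_eq_right_of_isUnit_det (-C⁻¹) (N ^ (i + 2)) hdet]

end BlockRank




open Matrix Module LinearMap

/-- The `n`-th Sierpinski matrix: `B 0 = (1)` and `B (n+1) = [[B n, B n], [0, B n]]`. -/
def sierpinski (F : Type*) [Zero F] [One F] : (n : ℕ) → Matrix (Fin (2 ^ n)) (Fin (2 ^ n)) F
  | 0 => 1
  | n + 1 =>
    Matrix.reindex (finSumFinEquiv.trans (finCongr (by rw [pow_succ, mul_two])))
      (finSumFinEquiv.trans (finCongr (by rw [pow_succ, mul_two])))
      (Matrix.fromBlocks (sierpinski F n) (sierpinski F n) 0 (sierpinski F n))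

section Sier

variable {F : Type*} [Field F]

/-- reindexing equivalence -/
def sierEquiv (n : ℕ) : Fin (2 ^ n) ⊕ Fin (2 ^ n) ≃ Fin (2 ^ (n + 1)) :=
  finSumFinEquiv.trans (finCongr (by rw [pow_succ, mul_two]))

lemma sier_succ (n : ℕ) :
    sierpinski F (n + 1) = (reindexAlgEquiv F F (sierEquiv n))
      (fromBlocks (sierpinski F n) (sierpinski F n) 0 (sierpinski F n)) := by
  rw [sierpinski]
  rfl

lemma det_sier (n : ℕ) : (sierpinski F n).det = 1 := by
  induction n with
  | zero => rw [show sierpinski F 0 = 1 from rfl, det_one]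
  | succ n ih =>
    rw [sier_succ, reindexAlgEquiv_apply, det_reindex_self, det_fromBlocks_zero₂₁, ih, mul_one]

end Sier
lemma rank_sier (F : Type*) [Field F] [CharZero F] (n : ℕ) :
    ∀ i : ℕ, ((sierpinski F n - 1) ^ i).rank = sierS n (n + 1 - i) := by
  induction n with
  | zero =>
    intro i
    rw [show sierpinski F 0 = 1 from rfl, sub_self]
    cases i with
    | zero =>
      rw [pow_zero (0 : Matrix (Fin (2 ^ 0)) (Fin (2 ^ 0)) F), Matrix.rank_one,
        Fintype.card_fin]
      norm_num [sierS]
    | succ i =>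
      rw [zero_pow (Nat.succ_ne_zero i), Matrix.rank_zero]
      have h0 : 0 + 1 - (i + 1) = 0 := by omega
      rw [h0]
      simp [sierS]
  | succ n ih =>
    intro i
    cases i with
    | zero =>
      rw [pow_zero, rank_one, Fintype.card_fin, Nat.sub_zero]
      exact (sierS_self (n + 1)).symm
    | succ i =>
      have hdet : (sierpinski F n).det = 1 := det_sier n
      have hcomm : sierpinski F n * (sierpinski F n - 1)
          = (sierpinski F n - 1) * sierpinski F n := by noncomm_ring
      set B := sierpinski F n with hB
      set N := B - 1 with hN
      have hc0 : ((i : F) + 1) ≠ 0 := Nat.cast_add_one_ne_zero i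
      set C : Matrix (Fin (2 ^ n)) (Fin (2 ^ n)) F := ((i : F) + 1) • B with hC
      have hCdet : IsUnit C.det := by
        rw [hC, Matrix.det_smul, hdet, mul_one]
        exact isUnit_iff_ne_zero.mpr (pow_ne_zero _ hc0)
      have hCN : Commute C N := by
        show C * N = N * C
        rw [hC, smul_mul_assoc, mul_smul_comm, hcomm]
      rw [sier_succ]
      rw [← _root_.map_one (reindexAlgEquiv F F (sierEquiv n)), ← _root_.map_sub, ← _root_.map_pow,
        reindexAlgEquiv_apply, rank_reindex]
      have hblock : fromBlocks B B 0 B - (1 : Matrix _ _ F) = fromBlocks N B 0 N := by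
        rw [← fromBlocks_one]
        ext x y
        cases x <;> cases y <;> simp [fromBlocks, hN]
      rw [hblock, pow_fromBlocks N B hcomm]
      have hsm : (i + 1) • (N ^ i * B) = N ^ i * C := by
        have hcast : ((i + 1 : ℕ) : F) = (i : F) + 1 := by push_cast; ring
        rw [hC, Matrix.mul_smul, ← hcast, Nat.cast_smul_eq_nsmul]
      rw [hsm, rank_aux N C hCdet hCN i, ih i, ih (i + 2)]
      have e1 : n + 1 + 1 - (i + 1) = n + 1 - i := by omega
      rw [e1, sierS_rec n (n + 1 - i)]
      congr 2

/-- The Weyr structure of the `n`-th Sierpinski matrix at its eigenvalue `1` is, as a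
multiset, the multiset of binomial coefficients `C(n, k)`, `0 ≤ k ≤ n`. -/
theorem sierpinski_weyr_structure_binomials {F : Type*} [Field F] [CharZero F] (n : ℕ) :
    (Multiset.range (n + 1)).map
        (fun i => ((sierpinski F n - 1) ^ i).rank - ((sierpinski F n - 1) ^ (i + 1)).rank) =
      (Multiset.range (n + 1)).map (fun k => n.choose k) := by
  calc (Multiset.range (n + 1)).map
        (fun i => ((sierpinski F n - 1) ^ i).rank - ((sierpinski F n - 1) ^ (i + 1)).rank)
      = (Multiset.range (n + 1)).map (fun i => n.choose ((n - i) / 2)) := by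
        apply Multiset.map_congr rfl
        intro i hi
        rw [Multiset.mem_range] at hi
        rw [rank_sier F n i, rank_sier F n (i + 1)]
        have e1 : n + 1 - i = (n - i) + 1 := by omega
        have e2 : n + 1 - (i + 1) = n - i := by omega
        rw [e1, e2, sierS_succ]
        omega
    _ = (Multiset.range (n + 1)).map (fun k => n.choose k) := multiset_binom n
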